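/- Let P ∈ ℂ[[t]] have constant coefficient 1 and let n ≥ 1. Then there exists a unique power series Q ∈ ℂ[[t]] with constant coefficient 1 such that Q(t^n) = ∏_{ζ : ζ^n = 1} P(ζ·t), where the product is over all complex n-th roots of unity ζ. Moreover, for every m ≥ 1 the ghost coordinates satisfy gh_m(Q) = gh_{mn}(P). (The series Q is denoted Fr_n(P), the n-th Frobenius of P.) -/

import Mathlib

noncomputable section

/-- Substitution `t ↦ tⁿ` in a power series: `(substPow n Q)(t) = Q(tⁿ)`. -/
def substPow (n : ℕ) (Q : PowerSeries ℂ) : PowerSeries ℂ :=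
  PowerSeries.mk fun j => if n ∣ j then PowerSeries.coeff (j / n) Q else 0

/-- The `m`-th ghost coordinate of a power series `P` (with constant coefficient `1`)
over `ℂ`: the `m`-th coefficient of `t·P'(t)/P(t)`. -/
def ghost (m : ℕ) (P : PowerSeries ℂ) : ℂ :=
  PowerSeries.coeff m (PowerSeries.X * P.derivativeFun * P⁻¹)

lemma coeff_derivativeFun' (f : PowerSeries ℂ) (n : ℕ) :
    PowerSeries.coeff n f.derivativeFun = PowerSeries.coeff (n + 1) f * (n + 1) :=
  PowerSeries.coeff_derivative f n

lemma coeff_substPow (n j : ℕ) (Q : PowerSeries ℂ) :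
    PowerSeries.coeff j (substPow n Q) =
      if n ∣ j then PowerSeries.coeff (j / n) Q else 0 := by
  simp [substPow, PowerSeries.coeff_mk]

lemma constantCoeff_substPow (n : ℕ) (Q : PowerSeries ℂ) :
    PowerSeries.constantCoeff (substPow n Q) = PowerSeries.constantCoeff Q := by
  rw [← PowerSeries.coeff_zero_eq_constantCoeff_apply, coeff_substPow,
    if_pos (dvd_zero n), Nat.zero_div, PowerSeries.coeff_zero_eq_constantCoeff_apply]

lemma substPow_mul (n : ℕ) (hn : 0 < n) (A B : PowerSeries ℂ) :
    substPow n (A * B) = substPow n A * substPow n B := by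
  ext j
  rw [coeff_substPow, PowerSeries.coeff_mul j (substPow n A) (substPow n B)]
  by_cases hj : n ∣ j
  · rw [if_pos hj, PowerSeries.coeff_mul]
    obtain ⟨c, rfl⟩ := hj
    rw [Nat.mul_div_cancel_left c hn]
    symm
    have himsub : (Finset.HasAntidiagonal.antidiagonal c).image (fun x : ℕ × ℕ => (n * x.1, n * x.2)) ⊆
        Finset.HasAntidiagonal.antidiagonal (n * c) := by
      intro x hx
      simp only [Finset.mem_image, Finset.HasAntidiagonal.mem_antidiagonal] at hx ⊢
      obtain ⟨a, ha, rfl⟩ := hx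
      rw [← Nat.mul_add, ha]
    have hinj : ∀ x ∈ Finset.HasAntidiagonal.antidiagonal c, ∀ y ∈ Finset.HasAntidiagonal.antidiagonal c,
        (fun x : ℕ × ℕ => (n * x.1, n * x.2)) x = (fun x : ℕ × ℕ => (n * x.1, n * x.2)) y →
        x = y := by
      intro x _ y _ h
      simp only [Prod.mk.injEq] at h
      exact Prod.ext (Nat.eq_of_mul_eq_mul_left hn h.1) (Nat.eq_of_mul_eq_mul_left hn h.2)
    have hz : ∀ x ∈ Finset.HasAntidiagonal.antidiagonal (n * c),
        x ∉ (Finset.HasAntidiagonal.antidiagonal c).image (fun x : ℕ × ℕ => (n * x.1, n * x.2)) →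
        PowerSeries.coeff x.1 (substPow n A) * PowerSeries.coeff x.2 (substPow n B) = 0 := by
      rintro ⟨x1, x2⟩ hx hnx
      rw [Finset.HasAntidiagonal.mem_antidiagonal] at hx
      by_cases h1 : n ∣ x1
      · have h2 : n ∣ x2 := (Nat.dvd_add_right h1).mp (hx ▸ Dvd.intro c rfl)
        exfalso
        apply hnx
        obtain ⟨a, rfl⟩ := h1
        obtain ⟨b, rfl⟩ := h2
        simp only [Finset.mem_image, Finset.HasAntidiagonal.mem_antidiagonal]
        refine ⟨(a, b), ?_, rfl⟩
        have : n * (a + b) = n * c := by rw [Nat.mul_add, hx]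
        exact Nat.eq_of_mul_eq_mul_left hn this
      · rw [coeff_substPow, if_neg h1, zero_mul]
    rw [← Finset.sum_subset himsub hz, Finset.sum_image hinj]
    apply Finset.sum_congr rfl
    intro x _
    rw [coeff_substPow, coeff_substPow, if_pos ⟨x.1, rfl⟩, if_pos ⟨x.2, rfl⟩,
      Nat.mul_div_cancel_left _ hn, Nat.mul_div_cancel_left _ hn]
  · rw [if_neg hj]
    symm
    apply Finset.sum_eq_zero
    rintro ⟨x1, x2⟩ hx
    rw [Finset.HasAntidiagonal.mem_antidiagonal] at hx
    by_cases h1 : n ∣ x1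
    · by_cases h2 : n ∣ x2
      · exact absurd (hx ▸ Nat.dvd_add h1 h2) hj
      · rw [coeff_substPow n x2, if_neg h2, mul_zero]
    · rw [coeff_substPow, if_neg h1, zero_mul]

lemma X_mul_derivativeFun_substPow (n : ℕ) (hn : 0 < n) (Q : PowerSeries ℂ) :
    PowerSeries.X * (substPow n Q).derivativeFun =
      (n : ℂ) • substPow n (PowerSeries.X * Q.derivativeFun) := by
  ext k
  rw [map_smul]
  cases k with
  | zero =>
    rw [PowerSeries.coeff_zero_X_mul, coeff_substPow, if_pos (dvd_zero n), Nat.zero_div,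
      PowerSeries.coeff_zero_eq_constantCoeff_apply]
    have : PowerSeries.constantCoeff (PowerSeries.X * Q.derivativeFun) = 0 := by
      rw [← PowerSeries.coeff_zero_eq_constantCoeff_apply, PowerSeries.coeff_zero_X_mul]
    rw [this, smul_zero]
  | succ k =>
    rw [PowerSeries.coeff_succ_X_mul, coeff_derivativeFun', coeff_substPow,
      coeff_substPow]
    by_cases h : n ∣ (k + 1)
    · rw [if_pos h, if_pos h]
      obtain ⟨d, hd⟩ := h
      obtain ⟨e, rfl⟩ : ∃ e, d = e + 1 := by
        rcases d with _ | e
        · exfalso; omega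
        · exact ⟨e, rfl⟩
      rw [hd, Nat.mul_div_cancel_left _ hn, PowerSeries.coeff_succ_X_mul,
        coeff_derivativeFun', smul_eq_mul]
      have hk : ((k : ℂ) + 1) = (n : ℂ) * ((e : ℂ) + 1) := by exact_mod_cast congrArg Nat.cast hd
      linear_combination (PowerSeries.coeff (e + 1) Q) * hk
    · rw [if_neg h, if_neg h, zero_mul, smul_zero]

/-- the logarithmic derivative -/
def logD (P : PowerSeries ℂ) : PowerSeries ℂ :=
  PowerSeries.X * P.derivativeFun * P⁻¹

lemma ghost_eq_coeff_logD (m : ℕ) (P : PowerSeries ℂ) :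
    ghost m P = PowerSeries.coeff m (logD P) := rfl

lemma mul_logD (P : PowerSeries ℂ) (hP : PowerSeries.constantCoeff P ≠ 0) :
    P * logD P = PowerSeries.X * P.derivativeFun := by
  have h := PowerSeries.mul_inv_cancel P hP
  unfold logD
  linear_combination (PowerSeries.X * P.derivativeFun) * h

lemma logD_one : logD 1 = 0 := by
  unfold logD
  rw [PowerSeries.derivativeFun_one, mul_zero, zero_mul]

lemma logD_mul (A B : PowerSeries ℂ) (hA : PowerSeries.constantCoeff A ≠ 0)
    (hB : PowerSeries.constantCoeff B ≠ 0) :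
    logD (A * B) = logD A + logD B := by
  unfold logD
  rw [PowerSeries.derivativeFun_mul, PowerSeries.mul_inv_rev]
  simp only [smul_eq_mul]
  have hA1 := PowerSeries.mul_inv_cancel A hA
  have hB1 := PowerSeries.mul_inv_cancel B hB
  linear_combination (PowerSeries.X * A.derivativeFun * A⁻¹) * hB1 +
    (PowerSeries.X * B.derivativeFun * B⁻¹) * hA1

lemma logD_prod (s : Finset ℕ) (f : ℕ → PowerSeries ℂ)
    (h : ∀ i ∈ s, PowerSeries.constantCoeff (f i) ≠ 0) :
    logD (∏ i ∈ s, f i) = ∑ i ∈ s, logD (f i) := by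
  classical
  induction s using Finset.induction_on with
  | empty => simp [logD_one]
  | insert _ _ hx ih =>
    rename_i a s
    rw [Finset.prod_insert hx, Finset.sum_insert hx,
      logD_mul _ _ (h a (Finset.mem_insert_self a s)) ?_,
      ih (fun i hi => h i (Finset.mem_insert_of_mem hi))]
    rw [map_prod, Finset.prod_ne_zero_iff]
    exact fun i hi => h i (Finset.mem_insert_of_mem hi)

lemma myConstantCoeff_rescale (a : ℂ) (P : PowerSeries ℂ) :
    PowerSeries.constantCoeff (PowerSeries.rescale a P) = PowerSeries.constantCoeff P := by
  rw [← PowerSeries.coeff_zero_eq_constantCoeff_apply, PowerSeries.coeff_rescale, pow_zero,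
    one_mul, PowerSeries.coeff_zero_eq_constantCoeff_apply]

lemma logD_rescale (P : PowerSeries ℂ) (hP : PowerSeries.constantCoeff P ≠ 0) (a : ℂ) :
    logD (PowerSeries.rescale a P) = PowerSeries.rescale a (logD P) := by
  have hcc := myConstantCoeff_rescale a P
  have hinv : (PowerSeries.rescale a P)⁻¹ = PowerSeries.rescale a P⁻¹ := by
    rw [PowerSeries.inv_eq_iff_mul_eq_one (hcc ▸ hP), ← map_mul,
      PowerSeries.inv_mul_cancel P hP, map_one]
  have hXd : PowerSeries.X * (PowerSeries.rescale a P).derivativeFun =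
      PowerSeries.rescale a (PowerSeries.X * P.derivativeFun) := by
    ext k
    cases k with
    | zero =>
      rw [PowerSeries.coeff_zero_X_mul, PowerSeries.coeff_rescale, pow_zero, one_mul,
        PowerSeries.coeff_zero_X_mul]
    | succ k =>
      rw [PowerSeries.coeff_succ_X_mul, coeff_derivativeFun',
        PowerSeries.coeff_rescale, PowerSeries.coeff_rescale, PowerSeries.coeff_succ_X_mul,
        coeff_derivativeFun']
      ring
  unfold logD
  rw [hinv, hXd, ← map_mul]

lemma logD_substPow (n : ℕ) (hn : 0 < n) (Q : PowerSeries ℂ)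
    (hQ : PowerSeries.constantCoeff Q ≠ 0) :
    logD (substPow n Q) = (n : ℂ) • substPow n (logD Q) := by
  have hccS : PowerSeries.constantCoeff (substPow n Q) ≠ 0 := by
    rw [constantCoeff_substPow]; exact hQ
  have hS1 := PowerSeries.mul_inv_cancel _ hccS
  have key : substPow n Q * substPow n (logD Q) =
      substPow n (PowerSeries.X * Q.derivativeFun) := by
    rw [← substPow_mul n hn, mul_logD Q hQ]
  unfold logD
  rw [X_mul_derivativeFun_substPow n hn, ← key, smul_mul_assoc]
  congr 1
  calc substPow n Q * substPow n (logD Q) * (substPow n Q)⁻¹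
      = substPow n (logD Q) * (substPow n Q * (substPow n Q)⁻¹) := by ring
    _ = substPow n (logD Q) := by rw [hS1, mul_one]

/-- **Existence and uniqueness of the Frobenius `Fr_n`.**
Let `P ∈ ℂ⟦t⟧` have constant coefficient `1` and let `n ≥ 1`.  Then there exists a
unique power series `Q ∈ ℂ⟦t⟧` with constant coefficient `1` such that
`Q(tⁿ) = ∏_{ζⁿ=1} P(ζ t)` (product over all complex `n`-th roots of unity).
Moreover, for every `m ≥ 1` one has `gh_m(Q) = gh_{mn}(P)`. -/
theorem frobenius_exists_unique_and_ghost
    (P : PowerSeries ℂ) (hP : PowerSeries.constantCoeff P = 1)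
    (n : ℕ) (hn : 1 ≤ n) :
    (∃! Q : PowerSeries ℂ, PowerSeries.constantCoeff Q = 1 ∧
        substPow n Q =
          ((Polynomial.nthRoots n (1 : ℂ)).map fun ζ => PowerSeries.rescale ζ P).prod) ∧
    (∀ Q : PowerSeries ℂ, PowerSeries.constantCoeff Q = 1 →
        substPow n Q =
          ((Polynomial.nthRoots n (1 : ℂ)).map fun ζ => PowerSeries.rescale ζ P).prod →
        ∀ m : ℕ, 1 ≤ m → ghost m Q = ghost (m * n) P) := by
  have hn0 : 0 < n := hn
  have hP0 : PowerSeries.constantCoeff P ≠ 0 := by rw [hP]; exact one_ne_zero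
  have hPne : P ≠ 0 := fun h => hP0 (by rw [h, map_zero])
  set ω : ℂ := Complex.exp (2 * Real.pi * Complex.I / n) with hωdef
  have hω : IsPrimitiveRoot ω n := Complex.isPrimitiveRoot_exp n (by omega)
  set R : PowerSeries ℂ :=
    ((Polynomial.nthRoots n (1 : ℂ)).map fun ζ => PowerSeries.rescale ζ P).prod with hRdef
  -- R as a product over Finset.range n
  have hroots : Polynomial.nthRoots n (1 : ℂ) =
      (Multiset.range n).map fun k => ω ^ k := by
    rw [hω.nthRoots_eq (one_pow n)]
    simp
  have hRprod : R = ∏ k ∈ Finset.range n, PowerSeries.rescale (ω ^ k) P := by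
    rw [hRdef, hroots, Multiset.map_map, Finset.prod_eq_multiset_prod, Finset.range_val]
    rfl
  -- constant coefficient of R is 1
  have hccR : PowerSeries.constantCoeff R = 1 := by
    rw [hRprod, map_prod]
    apply Finset.prod_eq_one
    intro i _
    rw [myConstantCoeff_rescale, hP]
  -- R is invariant under rescaling by ω
  have hRomega : PowerSeries.rescale ω R = R := by
    rw [hRprod, map_prod]
    have hterm : ∀ k : ℕ, PowerSeries.rescale ω (PowerSeries.rescale (ω ^ k) P)
        = PowerSeries.rescale (ω ^ (k + 1)) P := by
      intro k
      rw [PowerSeries.rescale_rescale, pow_succ]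
    simp_rw [hterm]
    apply mul_right_cancel₀ hPne
    have h1 : (∏ k ∈ Finset.range n, PowerSeries.rescale (ω ^ (k + 1)) P) *
        PowerSeries.rescale (ω ^ 0) P =
        ∏ k ∈ Finset.range (n + 1), PowerSeries.rescale (ω ^ k) P :=
      (Finset.prod_range_succ' (fun k => PowerSeries.rescale (ω ^ k) P) n).symm
    have h2 : ∏ k ∈ Finset.range (n + 1), PowerSeries.rescale (ω ^ k) P =
        (∏ k ∈ Finset.range n, PowerSeries.rescale (ω ^ k) P) *
          PowerSeries.rescale (ω ^ n) P :=
      Finset.prod_range_succ _ n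
    have h0 : PowerSeries.rescale (ω ^ 0) P = P := by
      rw [pow_zero, PowerSeries.rescale_one]; rfl
    have hnn : PowerSeries.rescale (ω ^ n) P = P := by
      rw [hω.pow_eq_one, PowerSeries.rescale_one]; rfl
    rw [h0] at h1
    rw [hnn] at h2
    rw [h1, h2]
  -- coefficients of R vanish off multiples of n
  have hvanish : ∀ j : ℕ, ¬ n ∣ j → PowerSeries.coeff j R = 0 := by
    intro j hj
    have h1 : ω ^ j * PowerSeries.coeff j R = PowerSeries.coeff j R := by
      conv_rhs => rw [← hRomega]
      rw [PowerSeries.coeff_rescale]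
    by_contra hc
    exact hj ((hω.pow_eq_one_iff_dvd j).mp
      (mul_right_cancel₀ hc (by rw [h1, one_mul])))
  -- the canonical Q
  set Q0 : PowerSeries ℂ := PowerSeries.mk fun m => PowerSeries.coeff (m * n) R with hQ0def
  have hccQ0 : PowerSeries.constantCoeff Q0 = 1 := by
    rw [← PowerSeries.coeff_zero_eq_constantCoeff_apply, hQ0def, PowerSeries.coeff_mk,
      Nat.zero_mul, PowerSeries.coeff_zero_eq_constantCoeff_apply, hccR]
  have hsubQ0 : substPow n Q0 = R := by
    ext j
    rw [coeff_substPow]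
    by_cases hj : n ∣ j
    · rw [if_pos hj, hQ0def, PowerSeries.coeff_mk, Nat.div_mul_cancel hj]
    · rw [if_neg hj, (hvanish j hj).symm]
  -- uniqueness from injectivity of substPow
  have huniq : ∀ y : PowerSeries ℂ, substPow n y = R → y = Q0 := by
    intro y hy
    ext m
    have h1 : PowerSeries.coeff m y = PowerSeries.coeff (m * n) (substPow n y) := by
      rw [coeff_substPow, if_pos (dvd_mul_left n m), Nat.mul_div_cancel m hn0]
    rw [h1, hy, hQ0def, PowerSeries.coeff_mk]
  constructor
  · exact ⟨Q0, ⟨hccQ0, hsubQ0⟩, fun y hy => huniq y hy.2⟩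
  · intro Q hccQ hsubQ m _
    have hQ0' : PowerSeries.constantCoeff Q ≠ 0 := by rw [hccQ]; exact one_ne_zero
    -- left side: logD of substPow
    have hL : PowerSeries.coeff (m * n) (logD (substPow n Q)) = (n : ℂ) * ghost m Q := by
      rw [logD_substPow n hn0 Q hQ0', map_smul, smul_eq_mul, coeff_substPow,
        if_pos (dvd_mul_left n m), Nat.mul_div_cancel m hn0, ghost_eq_coeff_logD]
    -- right side: logD of the product
    have hR : PowerSeries.coeff (m * n) (logD R) = (n : ℂ) * ghost (m * n) P := by
      rw [hRprod, logD_prod _ _ (fun i _ => by rw [myConstantCoeff_rescale, hP]; exact one_ne_zero)]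
      rw [map_sum]
      have hterm : ∀ k ∈ Finset.range n,
          PowerSeries.coeff (m * n) (logD (PowerSeries.rescale (ω ^ k) P)) =
            ghost (m * n) P := by
        intro k _
        rw [logD_rescale P hP0, PowerSeries.coeff_rescale]
        have : (ω ^ k) ^ (m * n) = 1 := by
          rw [← pow_mul, show k * (m * n) = n * (k * m) from by ring, pow_mul, hω.pow_eq_one,
            one_pow]
        rw [this, one_mul, ghost_eq_coeff_logD]
      rw [Finset.sum_congr rfl hterm, Finset.sum_const, Finset.card_range, nsmul_eq_mul]
    have hEq : (n : ℂ) * ghost m Q = (n : ℂ) * ghost (m * n) P := by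
      rw [← hL, ← hR, hsubQ]
    have hnC : (n : ℂ) ≠ 0 := Nat.cast_ne_zero.mpr (by omega)
    exact mul_left_cancel₀ hnC hEq

end
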